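/- (Lumped mass is the identity.) Assume Σ_{j=1}^N B_j(x) = 1 for every x ∈ [a,b] and that the constant function 1 belongs to a subspace P ⊆ V on which the approximate duality property holds. Define C ∈ ℝ^{N×N} by C_{ij} = ⟨D̂_i, B_j⟩ and its rowsum-lumped matrix by C^lumped_{ij} = δ_{ij} Σ_{k=1}^N C_{ik}. Then C^lumped is the N×N identity matrix. -/

import Mathlib

open MeasureTheory

/-- Lumped mass is the identity: If the family `B 1, …, B N` forms a
partition of unity on `[a,b]` and the constant function `1` belongs to a subspace
`P ⊆ V` on which the approximate duality property holds, then the rowsum-lumped matrix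
of the Petrov–Galerkin mass matrix `C i j = ⟨D̂ i, B j⟩` is the identity matrix. -/
theorem lumped_mass_is_identity
    (a b : ℝ) (hab : a < b) (N : ℕ) (hN : 1 ≤ N)
    (B : Fin N → ℝ → ℝ)
    (hBcont : ∀ i, ContinuousOn (B i) (Set.Icc a b))
    (hBli : ∀ c : Fin N → ℝ,
      (∀ᵐ x ∂(volume.restrict (Set.Icc a b)), ∑ i, c i * B i x = 0) → c = 0)
    (G : Matrix (Fin N) (Fin N) ℝ)
    (hG : ∀ i j, G i j = ∫ x in Set.Icc a b, B i x * B j x)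
    (D : Fin N → ℝ → ℝ)
    (hD : ∀ i x, D i x = ∑ j, G⁻¹ i j * B j x)
    (S : Matrix (Fin N) (Fin N) ℝ) (hS : S.PosDef)
    (Dhat : Fin N → ℝ → ℝ)
    (hDhat : ∀ i x, Dhat i x = ∑ j, S i j * B j x)
    (P : Submodule ℝ (ℝ → ℝ))
    (hPV : P ≤ Submodule.span ℝ (Set.range B))
    (hdual : ∀ f ∈ P, ∀ i,
      (∫ x in Set.Icc a b, f x * Dhat i x) = ∫ x in Set.Icc a b, f x * D i x)
    (hpart : ∀ x ∈ Set.Icc a b, (∑ j, B j x) = 1)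
    (hone : (fun _ : ℝ => (1 : ℝ)) ∈ P)
    (C : Matrix (Fin N) (Fin N) ℝ)
    (hC : ∀ i j, C i j = ∫ x in Set.Icc a b, Dhat i x * B j x)
    (Clumped : Matrix (Fin N) (Fin N) ℝ)
    (hClumped : ∀ i j, Clumped i j = if i = j then ∑ k, C i k else 0) :
    Clumped = 1 := by
  classical
  have hmeas : MeasurableSet (Set.Icc a b) := measurableSet_Icc
  have hDhatcont : ∀ i, ContinuousOn (Dhat i) (Set.Icc a b) := by
    intro i
    have : Dhat i = fun x => ∑ j, S i j * B j x := funext (hDhat i)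
    rw [this]
    exact continuousOn_finset_sum _ fun j _ => continuousOn_const.mul (hBcont j)
  have hDcont : ∀ i, ContinuousOn (D i) (Set.Icc a b) := by
    intro i
    have : D i = fun x => ∑ j, G⁻¹ i j * B j x := funext (hD i)
    rw [this]
    exact continuousOn_finset_sum _ fun j _ => continuousOn_const.mul (hBcont j)
  have hBBint : ∀ i j, IntegrableOn (fun x => B i x * B j x) (Set.Icc a b) :=
    fun i j => ((hBcont i).mul (hBcont j)).integrableOn_Icc
  -- G is positive definite, hence invertible
  have hGsym : G.IsHermitian := by
    ext i j
    simp only [Matrix.conjTranspose_apply, RCLike.star_def, conj_trivial, hG]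
    exact congrArg _ (funext fun x => mul_comm _ _)
  have hkey : ∀ c : Fin N → ℝ,
      (∫ x in Set.Icc a b, (∑ i, c i * B i x) ^ 2)
        = ∑ i, ∑ j, c i * c j * G i j := by
    intro c
    have hexp : ∀ x : ℝ, (∑ i, c i * B i x) ^ 2
        = ∑ i, ∑ j, c i * c j * (B i x * B j x) := by
      intro x
      rw [sq, Finset.sum_mul_sum]
      exact Finset.sum_congr rfl fun i _ => Finset.sum_congr rfl fun j _ => by ring
    simp_rw [hexp]
    rw [integral_finset_sum _ (fun i _ => integrable_finset_sum _
      (fun j _ => ((hBBint i j).const_mul _)))]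
    refine Finset.sum_congr rfl fun i _ => ?_
    rw [integral_finset_sum _ (fun j _ => (hBBint i j).const_mul _)]
    exact Finset.sum_congr rfl fun j _ => by rw [integral_const_mul, hG]
  have hGpd : G.PosDef := by
    refine ⟨hGsym, fun c hc => ?_⟩
    have hform : dotProduct c (G.mulVec c) = ∑ i, ∑ j, c i * c j * G i j := by
      simp only [dotProduct, Matrix.mulVec, Finset.mul_sum]
      exact Finset.sum_congr rfl fun i _ => Finset.sum_congr rfl fun j _ => by ring
    have hint : IntegrableOn (fun x => (∑ i, c i * B i x) ^ 2) (Set.Icc a b) := by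
      have : ContinuousOn (fun x => (∑ i, c i * B i x) ^ 2) (Set.Icc a b) :=
        (continuousOn_finset_sum _ fun i _ => continuousOn_const.mul (hBcont i)).pow 2
      exact this.integrableOn_Icc
    have hnn : 0 ≤ ∫ x in Set.Icc a b, (∑ i, c i * B i x) ^ 2 :=
      integral_nonneg fun x => sq_nonneg _
    have hne : (∫ x in Set.Icc a b, (∑ i, c i * B i x) ^ 2) ≠ 0 := by
      intro h0
      have := (integral_eq_zero_iff_of_nonneg
        (fun x => sq_nonneg ((fun x => ∑ i, c i * B i x) x)) hint).mp h0
      have hae : ∀ᵐ x ∂(volume.restrict (Set.Icc a b)), ∑ i, c i * B i x = 0 := by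
        filter_upwards [this] with x hx
        exact by simpa using pow_eq_zero_iff (n:=2) two_ne_zero |>.mp hx
      exact hc (by ext k; exact congrFun (hBli c hae) k)
    have : 0 < ∫ x in Set.Icc a b, (∑ i, c i * B i x) ^ 2 :=
      lt_of_le_of_ne hnn (Ne.symm hne)
    have hform2 : (c.sum fun i xi => c.sum fun j xj => xi * G i j * xj)
        = ∑ i, ∑ j, c i * c j * G i j := by
      rw [Finsupp.sum_fintype _ _ (fun i => by simp)]
      refine Finset.sum_congr rfl fun i _ => ?_
      rw [Finsupp.sum_fintype _ _ (fun j => by simp)]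
      exact Finset.sum_congr rfl fun j _ => by ring
    simpa only [star_trivial, hform2, ← hkey] using this
  have hGunit : IsUnit G.det := isUnit_iff_ne_zero.mpr (ne_of_gt hGpd.det_pos)
  have hGinv : G⁻¹ * G = 1 := Matrix.nonsing_inv_mul G hGunit
  -- ∫ B j = ∑ k, G j k
  have hintB : ∀ j, (∫ x in Set.Icc a b, B j x) = ∑ k, G j k := by
    intro j
    have h1 : (∫ x in Set.Icc a b, B j x)
        = ∫ x in Set.Icc a b, B j x * ∑ k, B k x := by
      refine (setIntegral_congr_fun hmeas fun x hx => ?_).symm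
      rw [hpart x hx, mul_one]
    rw [h1]
    simp_rw [Finset.mul_sum]
    rw [integral_finset_sum _ (fun k _ => hBBint j k)]
    exact Finset.sum_congr rfl fun k _ => (hG j k).symm
  -- row sum of C equals ∫ Dhat i
  have hrow : ∀ i, (∑ k, C i k) = ∫ x in Set.Icc a b, Dhat i x := by
    intro i
    have hint : ∀ k, IntegrableOn (fun x => Dhat i x * B k x) (Set.Icc a b) :=
      fun k => ((hDhatcont i).mul (hBcont k)).integrableOn_Icc
    have h1 : (∑ k, C i k) = ∫ x in Set.Icc a b, ∑ k, Dhat i x * B k x := by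
      rw [integral_finset_sum _ (fun k _ => hint k)]
      exact Finset.sum_congr rfl fun k _ => hC i k
    rw [h1]
    refine setIntegral_congr_fun hmeas fun x hx => ?_
    rw [← Finset.mul_sum, hpart x hx, mul_one]
  -- ∫ Dhat i = ∫ D i via duality with f = 1
  have hdual1 : ∀ i, (∫ x in Set.Icc a b, Dhat i x) = ∫ x in Set.Icc a b, D i x := by
    intro i
    have := hdual (fun _ => (1 : ℝ)) hone i
    simpa only [one_mul] using this
  -- ∫ D i = 1
  have hintD : ∀ i, (∫ x in Set.Icc a b, D i x) = 1 := by
    intro i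
    have h1 : D i = fun x => ∑ j, G⁻¹ i j * B j x := funext (hD i)
    rw [h1]
    rw [integral_finset_sum _ (fun j _ =>
      ((hBcont j).integrableOn_Icc.const_mul _))]
    have : ∀ j, (∫ x in Set.Icc a b, G⁻¹ i j * B j x) = G⁻¹ i j * ∑ k, G j k := by
      intro j; rw [integral_const_mul, hintB j]
    simp_rw [this, Finset.mul_sum]
    rw [Finset.sum_comm]
    have : ∀ k, (∑ j, G⁻¹ i j * G j k) = (1 : Matrix (Fin N) (Fin N) ℝ) i k := by
      intro k; rw [← hGinv]; simp [Matrix.mul_apply]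
    simp_rw [this]
    simp [Matrix.one_apply]
  ext i j
  rw [hClumped i j, Matrix.one_apply]
  by_cases h : i = j
  · simp only [h, if_true]
    rw [hrow j, hdual1 j, hintD j]
  · simp [h]
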